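/- If a finite group G admits a 1-rotational k-factorization F of the complete graph on G ∪ {∞}, then the G-stabilizers of the factors in F are pairwise conjugate subgroups of G, and each has order k. -/

import Mathlib

open SimpleGraph

/-- The image of a graph on `G ∪ {∞}` under right multiplication by `g` (with `∞ g = ∞`). -/
def shiftG {G : Type*} [Group G] (F : SimpleGraph (Option G)) (g : G) :
    SimpleGraph (Option G) :=
  F.map (Equiv.optionCongr (Equiv.mulRight g)).toEmbedding

/-- The `G`-stabilizer of a graph on `G ∪ {∞}`. -/
def stabG {G : Type*} [Group G] (F : SimpleGraph (Option G)) : Set G :=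
  {g | shiftG F g = F}

/-- A `k`-factor: a spanning `k`-regular subgraph of the complete graph. -/
def IsKFactor {V : Type*} (k : ℕ) (F : SimpleGraph V) : Prop :=
  ∀ v : V, (F.neighborSet v).ncard = k

/-- A `k`-factorization: a set of `k`-factors whose edges partition the complete graph. -/
def IsKFactorization {V : Type*} (k : ℕ) (𝓕 : Set (SimpleGraph V)) : Prop :=
  (∀ F ∈ 𝓕, IsKFactor k F) ∧
  ∀ u v : V, u ≠ v → ∃! F, F ∈ 𝓕 ∧ F.Adj u v

/-- A family of graphs on `G ∪ {∞}` is `1`-rotational if it is closed under the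
right multiplication action of `G`. -/
def IsRotational {G : Type*} [Group G] (𝓕 : Set (SimpleGraph (Option G))) : Prop :=
  ∀ F ∈ 𝓕, ∀ g : G, shiftG F g ∈ 𝓕

lemma shiftG_adj {G : Type*} [Group G] (F : SimpleGraph (Option G)) (g : G) (u v : Option G) :
    (shiftG F g).Adj u v ↔
      F.Adj ((Equiv.optionCongr (Equiv.mulRight g)).symm u)
        ((Equiv.optionCongr (Equiv.mulRight g)).symm v) := by
  constructor
  · rintro ⟨-, a, b, hab, rfl, rfl⟩
    simpa [← Equiv.optionCongr_symm, Equiv.mulRight_symm] using hab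
  · intro h
    exact ⟨fun huv => h.ne (by rw [huv]), _, _, h, by simp, by simp⟩

lemma shiftG_shiftG {G : Type*} [Group G] (F : SimpleGraph (Option G)) (g h : G) :
    shiftG (shiftG F g) h = shiftG F (g * h) := by
  have key : ∀ w : Option G, (Equiv.optionCongr (Equiv.mulRight g)).symm
      ((Equiv.optionCongr (Equiv.mulRight h)).symm w)
      = (Equiv.optionCongr (Equiv.mulRight (g * h))).symm w := by
    rintro (_ | w) <;> simp [← Equiv.optionCongr_symm, Equiv.mulRight_symm, mul_assoc, -Equiv.mulRight_mul]
  ext u v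
  simp only [shiftG_adj, key]

lemma shiftG_one {G : Type*} [Group G] (F : SimpleGraph (Option G)) :
    shiftG F 1 = F := by
  ext u v
  simp only [shiftG_adj]
  cases u <;> cases v <;> simp [Equiv.Perm.one_symm]

lemma shiftG_cancel {G : Type*} [Group G] (F : SimpleGraph (Option G)) (g : G) :
    shiftG (shiftG F g) g⁻¹ = F := by
  rw [shiftG_shiftG, mul_inv_cancel, shiftG_one]

lemma shiftG_adj_infty {G : Type*} [Group G] (F : SimpleGraph (Option G)) (g x : G) :
    (shiftG F g).Adj none (some x) ↔ F.Adj none (some (x * g⁻¹)) := by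
  simp [shiftG_adj, ← Equiv.optionCongr_symm, Equiv.mulRight_symm]

/-- The stabilizer as a subgroup. -/
def stabSub {G : Type*} [Group G] (F : SimpleGraph (Option G)) : Subgroup G where
  carrier := stabG F
  one_mem' := shiftG_one F
  mul_mem' := by
    intro a b ha hb
    show shiftG F (a * b) = F
    rw [← shiftG_shiftG, ha, hb]
  inv_mem' := by
    intro a ha
    show shiftG F a⁻¹ = F
    have : shiftG (shiftG F a) a⁻¹ = F := shiftG_cancel F a
    rwa [ha] at this

theorem stmt2 {G : Type*} [Group G] [Fintype G] (k : ℕ)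
    (𝓕 : Set (SimpleGraph (Option G)))
    (hfac : IsKFactorization k 𝓕) (hrot : IsRotational 𝓕) :
    (∀ F ∈ 𝓕, ∃ S : Subgroup G, (S : Set G) = stabG F ∧ Nat.card S = k) ∧
    ∀ F₁ ∈ 𝓕, ∀ F₂ ∈ 𝓕, ∃ g : G, stabG F₂ = (fun x => g⁻¹ * x * g) '' stabG F₁ := by
  obtain ⟨hreg, huniq⟩ := hfac
  have hkpos : 0 < k := by
    obtain ⟨F₀, ⟨hF₀, hadj⟩, _⟩ := huniq none (some 1) (by simp)
    have hne : (F₀.neighborSet none).Nonempty := ⟨some 1, hadj⟩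
    have := hreg F₀ hF₀ none
    rw [← this]
    exact (Set.ncard_pos (Set.toFinite _)).mpr hne
  have hnb : ∀ F ∈ 𝓕, ∃ a : G, F.Adj none (some a) := by
    intro F hF
    have h1 : (F.neighborSet none).Nonempty := by
      rw [← Set.ncard_pos (Set.toFinite _), hreg F hF none]
      exact hkpos
    obtain ⟨v, hv⟩ := h1
    cases v with
    | none => exact absurd hv (F.irrefl)
    | some a => exact ⟨a, hv⟩
  have hstab_of : ∀ F ∈ 𝓕, ∀ g b : G, F.Adj none (some b) →
      (shiftG F g).Adj none (some b) → shiftG F g = F := by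
    intro F hF g b h1 h2
    obtain ⟨Fu, _, hu⟩ := huniq none (some b) (by simp)
    exact (hu _ ⟨hrot F hF g, h2⟩).trans (hu F ⟨hF, h1⟩).symm
  have htrans : ∀ F₁ ∈ 𝓕, ∀ F₂ ∈ 𝓕, ∃ g, shiftG F₁ g = F₂ := by
    intro F₁ h1 F₂ h2
    obtain ⟨a, ha⟩ := hnb F₁ h1
    obtain ⟨b, hb⟩ := hnb F₂ h2
    refine ⟨a⁻¹ * b, ?_⟩
    have hadj : (shiftG F₁ (a⁻¹ * b)).Adj none (some b) := by
      rw [shiftG_adj_infty]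
      have : b * (a⁻¹ * b)⁻¹ = a := by group
      rwa [this]
    obtain ⟨Fu, _, hu⟩ := huniq none (some b) (by simp)
    exact (hu _ ⟨hrot _ h1 _, hadj⟩).trans (hu F₂ ⟨h2, hb⟩).symm
  constructor
  · intro F hF
    refine ⟨stabSub F, rfl, ?_⟩
    obtain ⟨a, ha⟩ := hnb F hF
    have himg : (fun h : G => (some (a * h) : Option G)) '' stabG F = F.neighborSet none := by
      ext v
      constructor
      · rintro ⟨h, hh, rfl⟩
        have hsh : shiftG F h = F := hh
        have : (shiftG F h).Adj none (some (a * h)) := by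
          rw [shiftG_adj_infty]
          have : a * h * h⁻¹ = a := by group
          rwa [this]
        rwa [hsh] at this
      · intro hv
        cases v with
        | none => exact absurd hv F.irrefl
        | some b =>
          refine ⟨a⁻¹ * b, ?_, by simp⟩
          have hadj : (shiftG F (a⁻¹ * b)).Adj none (some b) := by
            rw [shiftG_adj_infty]
            have : b * (a⁻¹ * b)⁻¹ = a := by group
            rwa [this]
          exact hstab_of F hF _ b hv hadj
    have hinj : Function.Injective (fun h : G => (some (a * h) : Option G)) := by
      intro x y hxy
      simpa using hxy
    have h1 : Nat.card (stabSub F) = (stabG F).ncard := by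
      rw [← Nat.card_coe_set_eq]
      rfl
    rw [h1, ← Set.ncard_image_of_injective _ hinj, himg, hreg F hF none]
  · intro F₁ h1 F₂ h2
    obtain ⟨g, hg⟩ := htrans F₁ h1 F₂ h2
    refine ⟨g, ?_⟩
    ext h
    constructor
    · intro hh
      have hh' : shiftG F₂ h = F₂ := hh
      refine ⟨g * h * g⁻¹, ?_, by simp; group⟩
      show shiftG F₁ (g * h * g⁻¹) = F₁
      have key : shiftG F₁ (g * h) = shiftG F₁ g := by
        rw [← shiftG_shiftG, hg, hh']
      calc shiftG F₁ (g * h * g⁻¹) = shiftG (shiftG F₁ (g * h)) g⁻¹ := by rw [shiftG_shiftG]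
        _ = shiftG (shiftG F₁ g) g⁻¹ := by rw [key]
        _ = F₁ := shiftG_cancel _ _
    · rintro ⟨x, hx, rfl⟩
      have hx' : shiftG F₁ x = F₁ := hx
      show shiftG F₂ (g⁻¹ * x * g) = F₂
      rw [← hg]
      calc shiftG (shiftG F₁ g) (g⁻¹ * x * g) = shiftG F₁ (g * (g⁻¹ * x * g)) :=
            shiftG_shiftG _ _ _
        _ = shiftG F₁ (x * g) := by
            congr 1
            group
        _ = shiftG (shiftG F₁ x) g := (shiftG_shiftG _ _ _).symm
        _ = shiftG F₁ g := by rw [hx']
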